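/- Let λ_1 ≥ ... ≥ λ_n > 0, η₀² ≥ 0, σ₀² > 0. Define ℓ₀(η²) = −(1/2)log(σ₀²(η²)) − (1/(2n)) Σ_i log(η²λ_i + 1) − (1/2)log(σ₀²) − 1/2, where σ₀²(η²) = (σ₀²/n) Σ_i (η₀²λ_i+1)/(η²λ_i+1). Then for all η² ≥ 0, ℓ₀(η₀²) − ℓ₀(η²) ≥ (η² − η₀²)² 𝔳(Λ) / (2(|η² − η₀²| + 1)² (η₀²+1)⁴ (λ_1+1)⁶ (λ_n^{−1}+1)²), where 𝔳(Λ) = (1/n)Σλ_i² − ((1/n)Σλ_i)². -/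

import Mathlib

lemma aux_log_ge_one {t : ℝ} (ht : 1 ≤ t) : Real.log t ≤ t/2 - (2*t)⁻¹ := by
  have key : ∀ x : ℝ, 0 < x →
      HasDerivAt (fun y : ℝ => y/2 - (2*y)⁻¹ - Real.log y) ((x-1)^2/(2*x^2)) x := by
    intro x hx
    have h1 : HasDerivAt (fun y : ℝ => y/2) (1/2) x := (hasDerivAt_id x).div_const 2
    have h2 : HasDerivAt (fun y : ℝ => (2*y)⁻¹) (-(2*1)/(2*x)^2) x :=
      (((hasDerivAt_id x).const_mul (2:ℝ))).inv (by positivity)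
    have h3 : HasDerivAt Real.log x⁻¹ x := Real.hasDerivAt_log (ne_of_gt hx)
    have h4 := (h1.sub h2).sub h3
    have heq : (1/2 - -(2*1)/(2*x)^2 - x⁻¹) = (x-1)^2/(2*x^2) := by
      field_simp
      ring
    rwa [heq] at h4
  have hmono : MonotoneOn (fun y : ℝ => y/2 - (2*y)⁻¹ - Real.log y) (Set.Ici 1) := by
    apply monotoneOn_of_deriv_nonneg (convex_Ici 1)
    · intro x hx
      exact (key x (lt_of_lt_of_le one_pos hx)).continuousAt.continuousWithinAt
    · intro x hx
      rw [interior_Ici] at hx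
      exact (key x (lt_trans one_pos hx)).differentiableAt.differentiableWithinAt
    · intro x hx
      rw [interior_Ici] at hx
      rw [(key x (lt_trans one_pos hx)).deriv]
      have hx0 : (0:ℝ) < x := lt_trans one_pos hx
      positivity
  have h0 := hmono (Set.mem_Ici.2 le_rfl) (Set.mem_Ici.2 ht) ht
  simp only [Real.log_one] at h0
  norm_num at h0
  have h2t : (2*t)⁻¹ = t⁻¹ * (1/2) := by rw [mul_inv]; ring
  rw [h2t]
  linarith

lemma aux_log_le_one {t : ℝ} (h0 : 0 < t) (h1 : t ≤ 1) :
    Real.log t ≤ t - 1 - (t-1)^2/2 := by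
  have key : ∀ x : ℝ, 0 < x →
      HasDerivAt (fun y : ℝ => Real.log y - (y - 1 - (y-1)^2/2)) ((x-1)^2/x) x := by
    intro x hx
    have h3 : HasDerivAt Real.log x⁻¹ x := Real.hasDerivAt_log (ne_of_gt hx)
    have hb : HasDerivAt (fun y : ℝ => y - 1) 1 x := (hasDerivAt_id x).sub_const 1
    have hsq : HasDerivAt (fun y : ℝ => (y-1)^2/2) ((2:ℕ) * (x-1)^1 * 1/2) x :=
      (hb.pow 2).div_const 2
    have h4 := h3.sub ((hb.sub hsq))
    have heq : (x⁻¹ - (1 - (2:ℕ)*(x-1)^1*1/2)) = (x-1)^2/x := by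
      push_cast
      field_simp
      ring
    rwa [heq] at h4
  have hmono : MonotoneOn (fun y : ℝ => Real.log y - (y - 1 - (y-1)^2/2)) (Set.Ioi 0) := by
    apply monotoneOn_of_deriv_nonneg (convex_Ioi 0)
    · intro x hx
      exact (key x hx).continuousAt.continuousWithinAt
    · intro x hx
      rw [interior_Ioi] at hx
      exact (key x hx).differentiableAt.differentiableWithinAt
    · intro x hx
      rw [interior_Ioi] at hx
      rw [(key x hx).deriv]
      have hx0 := Set.mem_Ioi.1 hx
      positivity
  have hend := hmono (Set.mem_Ioi.2 h0) (Set.mem_Ioi.2 one_pos) h1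
  simp only [Real.log_one] at hend
  norm_num at hend
  linarith


lemma log_quad {x c : ℝ} (hx : 0 < x) (hc : 0 < c) :
    Real.log x ≤ Real.log c + (x - c)/c - (x-c)^2/(2*(c*max x c)) := by
  rcases le_total c x with h | h
  · rw [max_eq_left h]
    have ht : 1 ≤ x/c := (one_le_div hc).2 h
    have h1 := aux_log_ge_one ht
    rw [Real.log_div hx.ne' hc.ne'] at h1
    have e1 : (x/c)/2 - (2*(x/c))⁻¹ = (x - c)/c - (x-c)^2/(2*(c*x)) := by
      field_simp
      ring
    rw [e1] at h1
    linarith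
  · rw [max_eq_right h]
    have h1 := aux_log_le_one (div_pos hx hc) ((div_le_one hc).2 h)
    rw [Real.log_div hx.ne' hc.ne'] at h1
    have e1 : x/c - 1 - (x/c - 1)^2/2 = (x-c)/c - (x-c)^2/(2*(c*c)) := by
      field_simp
    rw [e1] at h1
    linarith

lemma sum_pair_sq {n : ℕ} (x : Fin n → ℝ) :
    ∑ i, ∑ j, (x i - x j)^2 = 2*((n:ℝ) * ∑ i, (x i)^2) - 2*(∑ i, x i)^2 := by
  have h1 : ∀ i, ∑ j, (x i - x j)^2
      = (n:ℝ)*(x i)^2 - 2*(x i)*(∑ j, x j) + ∑ j, (x j)^2 := by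
    intro i
    rw [Finset.sum_congr rfl (fun j _ => (by ring :
      (x i - x j)^2 = (x i)^2 - 2*(x i)*(x j) + (x j)^2))]
    rw [Finset.sum_add_distrib, Finset.sum_sub_distrib, ← Finset.mul_sum,
      Finset.sum_const, Finset.card_univ, Fintype.card_fin, nsmul_eq_mul]
  rw [Finset.sum_congr rfl (fun i _ => h1 i)]
  rw [Finset.sum_add_distrib, Finset.sum_sub_distrib, ← Finset.mul_sum, ← Finset.sum_mul,
    ← Finset.mul_sum, Finset.sum_const, Finset.card_univ, Fintype.card_fin, nsmul_eq_mul]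
  ring

lemma sum_centered {n : ℕ} (hn : 0 < n) (x : Fin n → ℝ) :
    ∑ i, (x i - (∑ j, x j)/(n:ℝ))^2 = ((n:ℝ) * ∑ i, (x i)^2 - (∑ i, x i)^2)/(n:ℝ) := by
  have hN : (n:ℝ) ≠ 0 := Nat.cast_ne_zero.2 hn.ne'
  rw [Finset.sum_congr rfl (fun i _ => (by ring :
    (x i - (∑ j, x j)/(n:ℝ))^2
      = (x i)^2 - (2*((∑ j, x j)/(n:ℝ)))*(x i) + ((∑ j, x j)/(n:ℝ))^2))]
  rw [Finset.sum_add_distrib, Finset.sum_sub_distrib, ← Finset.mul_sum,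
    Finset.sum_const, Finset.card_univ, Fintype.card_fin, nsmul_eq_mul]
  field_simp
  ring

lemma gap_aux {n : ℕ} (hn : 0 < n) (r : Fin n → ℝ) (hr : ∀ i, 0 < r i) {K : ℝ} (hK0 : 0 < K)
    (hK : ∀ i, ((∑ j, r j)/(n:ℝ)) * max (r i) ((∑ j, r j)/(n:ℝ)) ≤ K) :
    ∑ i, Real.log (r i) ≤ (n:ℝ) * Real.log ((∑ j, r j)/(n:ℝ))
      - (∑ i, (r i - (∑ j, r j)/(n:ℝ))^2) / (2*K) := by
  have hN : (0:ℝ) < n := Nat.cast_pos.2 hn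
  set m := (∑ j, r j)/(n:ℝ) with hm
  have hmpos : 0 < m :=
    div_pos (Finset.sum_pos (fun i _ => hr i) ⟨⟨0,hn⟩, Finset.mem_univ _⟩) hN
  have key : ∀ i, Real.log (r i) ≤ Real.log m + (r i - m)/m - (r i - m)^2/(2*K) := by
    intro i
    have h1 := log_quad (hr i) hmpos
    have hden : 0 < 2*(m * max (r i) m) := by
      have : 0 < max (r i) m := lt_max_of_lt_left (hr i)
      positivity
    have h2 : (r i - m)^2/(2*K) ≤ (r i - m)^2/(2*(m*max (r i) m)) := by
      apply div_le_div_of_nonneg_left (sq_nonneg _) hden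
      linarith [hK i]
    linarith
  calc ∑ i, Real.log (r i)
      ≤ ∑ i, (Real.log m + (r i - m)/m - (r i - m)^2/(2*K)) :=
        Finset.sum_le_sum (fun i _ => key i)
    _ = (n:ℝ)*Real.log m + ((∑ i, r i) - (n:ℝ)*m)/m - (∑ i, (r i - m)^2)/(2*K) := by
        rw [Finset.sum_sub_distrib, Finset.sum_add_distrib, Finset.sum_const,
          Finset.card_univ, Fintype.card_fin, nsmul_eq_mul, ← Finset.sum_div,
          Finset.sum_sub_distrib, Finset.sum_const, Finset.card_univ, Fintype.card_fin,
          nsmul_eq_mul, ← Finset.sum_div]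
    _ = (n:ℝ)*Real.log m - (∑ i, (r i - m)^2)/(2*K) := by
        have : (∑ i, r i) - (n:ℝ)*m = 0 := by
          rw [hm]; field_simp; ring
        rw [this]
        simp


set_option maxHeartbeats 2000000 in
lemma poly_caseI {η0sq ηsq l1 ln q p : ℝ} (dd : ℝ)
    (hη0 : 0 ≤ η0sq) (hη : 0 ≤ ηsq) (hc : ηsq ≤ η0sq)
    (hl1pos : 0 < l1) (hlnpos : 0 < ln) (hln1 : ln ≤ l1) (hdd0 : 0 ≤ dd)
    (hq : q = η0sq*l1+1) (hp : p = ηsq*l1+1) :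
    4*(q/p)^2*p^4 ≤ 2*(dd+1)^2*(η0sq+1)^4*(l1+1)^6*(ln⁻¹+1)^2 := by
  have hppos : 0 < p := by rw [hp]; nlinarith [mul_nonneg hη hl1pos.le]
  have hqpos : 0 < q := by rw [hq]; nlinarith [mul_nonneg hη0 hl1pos.le]
  have e4 : 4*(q/p)^2*p^4 = 4*(q^2*p^2) := by
    field_simp
  rw [e4]
  have hple : p ≤ q := by
    rw [hp, hq]; nlinarith [mul_nonneg (sub_nonneg.2 hc) hl1pos.le]
  have hqle : q ≤ (η0sq+1)*(l1+1) := by rw [hq]; nlinarith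
  have c1 : q^2 ≤ ((η0sq+1)*(l1+1))^2 := by nlinarith
  have c2 : p^2 ≤ q^2 := by nlinarith
  have hmu1 : 1 ≤ l1 * ln⁻¹ := by
    rw [← div_eq_mul_inv]
    exact (one_le_div hlnpos).2 hln1
  have hmu2 : 2 ≤ (l1+1)*(ln⁻¹+1) := by
    have h0 : 0 < ln⁻¹ := inv_pos.2 hlnpos
    nlinarith
  calc 4*(q^2*p^2)
      ≤ 4*(((η0sq+1)*(l1+1))^2 * ((η0sq+1)*(l1+1))^2) := by
        apply mul_le_mul_of_nonneg_left _ (by norm_num)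
        exact mul_le_mul c1 (c2.trans c1) (sq_nonneg _) (by positivity)
    _ = 2*((η0sq+1)^4*(l1+1)^4)*2 := by ring
    _ ≤ 2*((η0sq+1)^4*(l1+1)^4)*((l1+1)*(ln⁻¹+1))^2 := by
        apply mul_le_mul_of_nonneg_left _ (by positivity)
        nlinarith [hmu2]
    _ = (1:ℝ)*(2*(η0sq+1)^4*(l1+1)^6*(ln⁻¹+1)^2) := by ring
    _ ≤ (dd+1)^2*(2*(η0sq+1)^4*(l1+1)^6*(ln⁻¹+1)^2) := by
        have hx : (1:ℝ) ≤ (dd+1)^2 := by nlinarith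
        have hy : (0:ℝ) ≤ 2*(η0sq+1)^4*(l1+1)^6*(ln⁻¹+1)^2 := by positivity
        exact mul_le_mul_of_nonneg_right hx hy
    _ = 2*(dd+1)^2*(η0sq+1)^4*(l1+1)^6*(ln⁻¹+1)^2 := by ring

set_option maxHeartbeats 2000000 in
lemma poly_caseII {η0sq ηsq l1 ln qn s p : ℝ} (dd : ℝ)
    (hη0 : 0 ≤ η0sq) (hη : 0 ≤ ηsq)
    (hl1pos : 0 < l1) (hlnpos : 0 < ln) (hln1 : ln ≤ l1)
    (hdd0 : 0 ≤ dd) (hdge : ηsq - η0sq ≤ dd)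
    (hqn : qn = η0sq*ln+1) (hs : s = ηsq*ln+1) (hp : p = ηsq*l1+1) :
    4*(qn/s)^2*p^4 ≤ 2*(dd+1)^2*(η0sq+1)^4*(l1+1)^6*(ln⁻¹+1)^2 := by
  have hppos : 0 < p := by rw [hp]; nlinarith [mul_nonneg hη hl1pos.le]
  have hspos : 0 < s := by rw [hs]; nlinarith [mul_nonneg hη hlnpos.le]
  have hqnpos : 0 < qn := by rw [hqn]; nlinarith [mul_nonneg hη0 hlnpos.le]
  have e4 : 4*(qn/s)^2*p^4 = (4*(qn^2*p^4))/s^2 := by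
    field_simp
  rw [e4, div_le_iff₀ (pow_pos hspos 2)]
  have cA : qn ≤ (η0sq+1)*(ln+1) := by rw [hqn]; nlinarith
  have cB : p ≤ (dd+1)*(η0sq+1)*(l1+1) := by
    rw [hp]
    nlinarith [mul_le_mul_of_nonneg_right (by linarith : ηsq ≤ η0sq + dd) hl1pos.le,
      mul_nonneg (mul_nonneg hdd0 hη0) hl1pos.le, mul_nonneg hdd0 hη0]
  have cC : 4*(ln*p) ≤ (l1+1)^2*s := by
    rw [hp, hs]
    nlinarith [sq_nonneg (l1-1), mul_nonneg (mul_nonneg hη hlnpos.le) (sq_nonneg (l1-1)),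
      hln1]
  have d1 : qn^2 ≤ ((η0sq+1)*(ln+1))^2 := by nlinarith
  have d2 : p^2 ≤ ((dd+1)*(η0sq+1)*(l1+1))^2 := by nlinarith
  have d3 : 16*(ln^2*p^2) ≤ ((l1+1)^2*s)^2 := by
    have h1 := mul_le_mul cC cC
      (mul_nonneg (by norm_num) (mul_nonneg hlnpos.le hppos.le))
      (mul_nonneg (sq_nonneg _) hspos.le)
    nlinarith [h1]
  have m12 : qn^2*p^2 ≤ ((η0sq+1)*(ln+1))^2 * ((dd+1)*(η0sq+1)*(l1+1))^2 :=
    mul_le_mul d1 d2 (sq_nonneg _) (sq_nonneg _)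
  have H : (qn^2*p^2)*(16*(ln^2*p^2))
      ≤ (((η0sq+1)*(ln+1))^2 * ((dd+1)*(η0sq+1)*(l1+1))^2)*((l1+1)^2*s)^2 :=
    mul_le_mul m12 d3 (by positivity) (by positivity)
  rw [← mul_le_mul_iff_of_pos_left (pow_pos hlnpos 2)]
  have e5 : ln^2*(2*(dd+1)^2*(η0sq+1)^4*(l1+1)^6*(ln⁻¹+1)^2*s^2)
      = 2*((((η0sq+1)*(ln+1))^2 * ((dd+1)*(η0sq+1)*(l1+1))^2)*((l1+1)^2*s)^2) := by
    field_simp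
    ring
  rw [e5]
  have eL : ln^2*(4*(qn^2*p^4)) = (1/4)*((qn^2*p^2)*(16*(ln^2*p^2))) := by ring
  rw [eL]
  have hZ : 0 ≤ (((η0sq+1)*(ln+1))^2 * ((dd+1)*(η0sq+1)*(l1+1))^2)*((l1+1)^2*s)^2 := by
    positivity
  generalize hLgen : (qn^2*p^2)*(16*(ln^2*p^2)) = L at H ⊢
  generalize hZgen : (((η0sq+1)*(ln+1))^2 * ((dd+1)*(η0sq+1)*(l1+1))^2)*((l1+1)^2*s)^2 = Z at H hZ ⊢
  linarith

set_option maxHeartbeats 1000000 in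

/-- Quadratic separation of the population profile likelihood at `η₀²` (full-rank case). -/
theorem stmt11 {n : ℕ} (hn : 0 < n) (σ0sq η0sq : ℝ) (hσ : 0 < σ0sq) (hη0 : 0 ≤ η0sq)
    (lam : Fin n → ℝ) (hdec : Antitone lam) (hpos : ∀ i, 0 < lam i)
    (ℓ0 : ℝ → ℝ)
    (hℓ0 : ∀ ηsq : ℝ, ℓ0 ηsq =
      -(1 / 2) * Real.log ((σ0sq / n) * ∑ i, (η0sq * lam i + 1) / (ηsq * lam i + 1))
        - (1 / (2 * (n : ℝ))) * ∑ i, Real.log (ηsq * lam i + 1)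
        - (1 / 2) * Real.log σ0sq - 1 / 2)
    (ηsq : ℝ) (hη : 0 ≤ ηsq) :
    ℓ0 η0sq - ℓ0 ηsq ≥
      (ηsq - η0sq) ^ 2
          * ((1 / (n : ℝ)) * ∑ i, (lam i) ^ 2 - ((1 / (n : ℝ)) * ∑ i, lam i) ^ 2)
        / (2 * (|ηsq - η0sq| + 1) ^ 2 * (η0sq + 1) ^ 4 * (lam ⟨0, hn⟩ + 1) ^ 6
            * ((lam ⟨n - 1, Nat.sub_lt hn one_pos⟩)⁻¹ + 1) ^ 2) := by
  have hN : (0:ℝ) < n := Nat.cast_pos.2 hn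
  have hNne : (n:ℝ) ≠ 0 := hN.ne'
  set l1 := lam ⟨0, hn⟩ with hl1
  set ln := lam ⟨n - 1, Nat.sub_lt hn one_pos⟩ with hln
  set dd := |ηsq - η0sq| with hdd
  have hl1pos : 0 < l1 := hpos _
  have hlnpos : 0 < ln := hpos _
  have hle1 : ∀ i, lam i ≤ l1 := by
    intro i
    rw [hl1]
    exact hdec (by rw [Fin.le_def]; exact Nat.zero_le _)
  have hlen : ∀ i, ln ≤ lam i := by
    intro i
    rw [hln]
    refine hdec ?_
    rw [Fin.le_def]
    show i.1 ≤ n - 1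
    have := i.isLt
    omega
  have hln_le_l1 : ln ≤ l1 := (hlen ⟨0, hn⟩).trans (hle1 ⟨0, hn⟩)
  have hdd0 : 0 ≤ dd := by rw [hdd]; exact abs_nonneg _
  clear_value l1 ln dd
  obtain ⟨A, hA⟩ : ∃ A : Fin n → ℝ, ∀ i, A i = η0sq * lam i + 1 := ⟨_, fun _ => rfl⟩
  obtain ⟨B, hB⟩ : ∃ B : Fin n → ℝ, ∀ i, B i = ηsq * lam i + 1 := ⟨_, fun _ => rfl⟩
  obtain ⟨r, hr⟩ : ∃ r : Fin n → ℝ, ∀ i, r i = A i / B i := ⟨_, fun _ => rfl⟩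
  obtain ⟨p, hp⟩ : ∃ p : ℝ, p = ηsq * l1 + 1 := ⟨_, rfl⟩
  obtain ⟨q, hq⟩ : ∃ q : ℝ, q = η0sq * l1 + 1 := ⟨_, rfl⟩
  obtain ⟨s, hs⟩ : ∃ s : ℝ, s = ηsq * ln + 1 := ⟨_, rfl⟩
  obtain ⟨qn, hqn⟩ : ∃ qn : ℝ, qn = η0sq * ln + 1 := ⟨_, rfl⟩
  have hApos : ∀ i, 0 < A i := fun i => by
    rw [hA]; nlinarith [mul_nonneg hη0 (hpos i).le]
  have hBpos : ∀ i, 0 < B i := fun i => by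
    rw [hB]; nlinarith [mul_nonneg hη (hpos i).le]
  have hrpos : ∀ i, 0 < r i := fun i => by rw [hr]; exact div_pos (hApos i) (hBpos i)
  have hppos : 0 < p := by rw [hp]; nlinarith [mul_nonneg hη hl1pos.le]
  have hqpos : 0 < q := by rw [hq]; nlinarith [mul_nonneg hη0 hl1pos.le]
  have hspos : 0 < s := by rw [hs]; nlinarith [mul_nonneg hη hlnpos.le]
  have hqnpos : 0 < qn := by rw [hqn]; nlinarith [mul_nonneg hη0 hlnpos.le]
  have hBlep : ∀ i, B i ≤ p := fun i => by
    rw [hB, hp]; nlinarith [mul_le_mul_of_nonneg_left (hle1 i) hη]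
  have hm0 : 0 < (∑ j, r j)/(n:ℝ) :=
    div_pos (Finset.sum_pos (fun i _ => hrpos i) ⟨⟨0,hn⟩, Finset.mem_univ _⟩) hN
  -- Step A : rewrite the likelihood difference
  have hDiff : ℓ0 η0sq - ℓ0 ηsq
      = (1/2) * Real.log ((∑ j, r j)/(n:ℝ)) - (1/(2*(n:ℝ))) * ∑ i, Real.log (r i) := by
    rw [hℓ0 η0sq, hℓ0 ηsq]
    have e1 : ∑ i, (η0sq * lam i + 1)/(η0sq * lam i + 1) = (n:ℝ) := by
      rw [Finset.sum_congr rfl (fun i _ => div_self (show η0sq*lam i+1 ≠ 0 from by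
        have := hApos i; rw [hA] at this; linarith))]
      simp
    rw [e1, div_mul_cancel₀ _ hNne]
    have e2 : ∑ i, (η0sq * lam i + 1)/(ηsq * lam i + 1) = ∑ j, r j :=
      Finset.sum_congr rfl (fun i _ => by rw [hr, hA, hB])
    rw [e2]
    have e3 : σ0sq/(n:ℝ) * (∑ j, r j) = σ0sq * ((∑ j, r j)/(n:ℝ)) := by ring
    rw [e3, Real.log_mul hσ.ne' hm0.ne']
    have e4 : ∑ i, Real.log (ηsq * lam i + 1) = ∑ i, Real.log (B i) :=
      Finset.sum_congr rfl (fun i _ => by rw [hB])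
    have e5 : ∑ i, Real.log (η0sq * lam i + 1) = ∑ i, Real.log (A i) :=
      Finset.sum_congr rfl (fun i _ => by rw [hA])
    rw [e4, e5]
    have e6 : ∑ i, Real.log (r i) = ∑ i, Real.log (A i) - ∑ i, Real.log (B i) := by
      rw [← Finset.sum_sub_distrib]
      exact Finset.sum_congr rfl (fun i _ => by
        rw [hr, Real.log_div (hApos i).ne' (hBpos i).ne'])
    rw [e6]
    ring
  -- variance comparison
  have hvar_pair : ∀ i j, ((ηsq-η0sq)^2/p^4) * (lam i - lam j)^2 ≤ (r i - r j)^2 := by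
    intro i j
    have hij : r i - r j = ((η0sq - ηsq)*(lam i - lam j))/(B i * B j) := by
      rw [hr, hr, div_sub_div _ _ (hBpos i).ne' (hBpos j).ne', hA, hA, hB, hB]
      congr 1
      ring
    rw [hij, div_pow]
    have hBB : (B i * B j)^2 ≤ p^4 := by
      have h1 : B i * B j ≤ p * p :=
        mul_le_mul (hBlep i) (hBlep j) (hBpos j).le ((hBpos i).le.trans (hBlep i))
      calc (B i*B j)^2 ≤ (p*p)^2 := by
            have h0 : 0 ≤ B i * B j := mul_nonneg (hBpos i).le (hBpos j).le
            exact pow_le_pow_left₀ h0 h1 2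
        _ = p^4 := by ring
    have hBBpos : 0 < (B i * B j)^2 := by
      have h1 := hBpos i; have h2 := hBpos j; positivity
    have e : ((η0sq-ηsq)*(lam i-lam j))^2 = (ηsq-η0sq)^2*(lam i-lam j)^2 := by ring
    rw [e]
    have e2 : ((ηsq-η0sq)^2/p^4)*(lam i-lam j)^2 = ((ηsq-η0sq)^2*(lam i-lam j)^2)/p^4 := by
      ring
    rw [e2]
    exact div_le_div_of_nonneg_left (by positivity) hBBpos hBB
  have hvar : ((ηsq-η0sq)^2/p^4) * ((n:ℝ)*∑ i, (lam i)^2 - (∑ i, lam i)^2)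
      ≤ (n:ℝ)*∑ i, (r i)^2 - (∑ i, r i)^2 := by
    have h3 : ∑ i, ∑ j, ((ηsq-η0sq)^2/p^4) * (lam i - lam j)^2 ≤ ∑ i, ∑ j, (r i - r j)^2 :=
      Finset.sum_le_sum (fun i _ => Finset.sum_le_sum (fun j _ => hvar_pair i j))
    simp only [← Finset.mul_sum] at h3
    rw [sum_pair_sq lam, sum_pair_sq r] at h3
    nlinarith [h3]
  have hVnn : 0 ≤ (n:ℝ)*∑ i, (lam i)^2 - (∑ i, lam i)^2 := by
    have h1 := sum_pair_sq lam
    have h2 : 0 ≤ ∑ i, ∑ j, (lam i - lam j)^2 :=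
      Finset.sum_nonneg (fun i _ => Finset.sum_nonneg (fun j _ => sq_nonneg _))
    linarith
  have hT : ((ηsq-η0sq)^2/p^4) * ((n:ℝ)*∑ i, (lam i)^2 - (∑ i, lam i)^2) / (n:ℝ)
      ≤ ∑ i, (r i - (∑ j, r j)/(n:ℝ))^2 := by
    rw [sum_centered hn r]
    gcongr
  have hVeq : (1/(n:ℝ)) * ∑ i, (lam i)^2 - ((1/(n:ℝ)) * ∑ i, lam i)^2
      = ((n:ℝ)*∑ i, (lam i)^2 - (∑ i, lam i)^2)/(n:ℝ)^2 := by
    field_simp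
  -- choice of K
  obtain ⟨K, hK0, hKb, hKW⟩ : ∃ K : ℝ, 0 < K ∧
      (∀ i, ((∑ j, r j)/(n:ℝ)) * max (r i) ((∑ j, r j)/(n:ℝ)) ≤ K) ∧
      4*K*p^4 ≤ 2*(dd+1)^2*(η0sq+1)^4*(l1+1)^6*(ln⁻¹+1)^2 := by
    rcases le_total ηsq η0sq with hc | hc
    · -- case I : ηsq ≤ η0sq, K = (q/p)^2
      refine ⟨(q/p)^2, pow_pos (div_pos hqpos hppos) 2, ?_, ?_⟩
      · have hrb : ∀ i, r i ≤ q/p := by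
          intro i
          rw [hr, div_le_div_iff₀ (hBpos i) hppos]
          rw [hA, hB, hq, hp]
          nlinarith [mul_nonneg (sub_nonneg.2 hc) (sub_nonneg.2 (hle1 i))]
        have hmb : (∑ j, r j)/(n:ℝ) ≤ q/p := by
          rw [div_le_iff₀ hN]
          calc ∑ j, r j ≤ ∑ _j : Fin n, q/p := Finset.sum_le_sum (fun i _ => hrb i)
            _ = (n:ℝ)*(q/p) := by
                rw [Finset.sum_const, Finset.card_univ, Fintype.card_fin, nsmul_eq_mul]
            _ = q/p*(n:ℝ) := by ring
        intro i
        calc ((∑ j, r j)/(n:ℝ)) * max (r i) ((∑ j, r j)/(n:ℝ))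
            ≤ (q/p) * (q/p) := by
              exact mul_le_mul hmb (max_le (hrb i) hmb)
                (le_max_of_le_left (hrpos i).le) (div_nonneg hqpos.le hppos.le)
          _ = (q/p)^2 := by ring
      · exact poly_caseI dd hη0 hη hc hl1pos hlnpos hln_le_l1 hdd0 hq hp
    · -- case II : η0sq ≤ ηsq, K = (qn/s)^2
      refine ⟨(qn/s)^2, pow_pos (div_pos hqnpos hspos) 2, ?_, ?_⟩
      · have hrb : ∀ i, r i ≤ qn/s := by
          intro i
          rw [hr, div_le_div_iff₀ (hBpos i) hspos]
          rw [hA, hB, hqn, hs]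
          nlinarith [mul_nonneg (sub_nonneg.2 hc) (sub_nonneg.2 (hlen i))]
        have hmb : (∑ j, r j)/(n:ℝ) ≤ qn/s := by
          rw [div_le_iff₀ hN]
          calc ∑ j, r j ≤ ∑ _j : Fin n, qn/s := Finset.sum_le_sum (fun i _ => hrb i)
            _ = (n:ℝ)*(qn/s) := by
                rw [Finset.sum_const, Finset.card_univ, Fintype.card_fin, nsmul_eq_mul]
            _ = qn/s*(n:ℝ) := by ring
        intro i
        calc ((∑ j, r j)/(n:ℝ)) * max (r i) ((∑ j, r j)/(n:ℝ))
            ≤ (qn/s) * (qn/s) := by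
              exact mul_le_mul hmb (max_le (hrb i) hmb)
                (le_max_of_le_left (hrpos i).le) (div_nonneg hqnpos.le hspos.le)
          _ = (qn/s)^2 := by ring
      · have hdge : ηsq - η0sq ≤ dd := by rw [hdd]; exact le_abs_self _
        exact poly_caseII dd hη0 hη hl1pos hlnpos hln_le_l1 hdd0 hdge hqn hs hp
  -- gap bound
  have hgap := gap_aux hn r hrpos hK0 hKb
  have hfinal1 : ℓ0 η0sq - ℓ0 ηsq ≥ (∑ i, (r i - (∑ j, r j)/(n:ℝ))^2)/(4*(n:ℝ)*K) := by
    rw [hDiff]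
    have h1 : (1/(2*(n:ℝ)))*∑ i, Real.log (r i)
        ≤ (1/(2*(n:ℝ)))*((n:ℝ) * Real.log ((∑ j, r j)/(n:ℝ))
            - (∑ i, (r i - (∑ j, r j)/(n:ℝ))^2) / (2*K)) :=
      mul_le_mul_of_nonneg_left hgap (by positivity)
    have e : (1/(2*(n:ℝ)))*((n:ℝ) * Real.log ((∑ j, r j)/(n:ℝ))
            - (∑ i, (r i - (∑ j, r j)/(n:ℝ))^2) / (2*K))
        = (1/2) * Real.log ((∑ j, r j)/(n:ℝ))
            - (∑ i, (r i - (∑ j, r j)/(n:ℝ))^2)/(4*(n:ℝ)*K) := by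
      field_simp
      ring
    rw [e] at h1
    linarith
  -- final assembly
  rw [ge_iff_le]
  have hV0 : 0 ≤ (1/(n:ℝ)) * ∑ i, (lam i)^2 - ((1/(n:ℝ)) * ∑ i, lam i)^2 := by
    rw [hVeq]
    exact div_nonneg hVnn (sq_nonneg _)
  have hnum : 0 ≤ (ηsq - η0sq)^2 * ((1/(n:ℝ)) * ∑ i, (lam i)^2 - ((1/(n:ℝ)) * ∑ i, lam i)^2) :=
    mul_nonneg (sq_nonneg _) hV0
  calc (ηsq - η0sq)^2 * ((1/(n:ℝ)) * ∑ i, (lam i)^2 - ((1/(n:ℝ)) * ∑ i, lam i)^2)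
        / (2*(dd+1)^2*(η0sq+1)^4*(l1+1)^6*(ln⁻¹+1)^2)
      ≤ (ηsq - η0sq)^2 * ((1/(n:ℝ)) * ∑ i, (lam i)^2 - ((1/(n:ℝ)) * ∑ i, lam i)^2)
        / (4*K*p^4) := by
        exact div_le_div_of_nonneg_left hnum (mul_pos (mul_pos (by norm_num) hK0) (pow_pos hppos 4)) hKW
    _ = (((ηsq-η0sq)^2/p^4) * ((n:ℝ)*∑ i, (lam i)^2 - (∑ i, lam i)^2) / (n:ℝ))
        / (4*(n:ℝ)*K) := by
        rw [hVeq]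
        field_simp [hNne, hppos.ne', hK0.ne']
    _ ≤ (∑ i, (r i - (∑ j, r j)/(n:ℝ))^2)/(4*(n:ℝ)*K) := by gcongr
    _ ≤ ℓ0 η0sq - ℓ0 ηsq := hfinal1
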